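/- Let L be a finite-dimensional Lie algebra, M a maximal subalgebra of L, and B an ideal of L with B ⊆ M. If (C/B)/(D/B) is a c-section of M/B in L/B (i.e., (C/B)/(D/B) is a chief factor of L/B with D/B ⊆ M/B and L/B = M/B + C/B), then (M ∩ C)/D is a c-section of M in L, and ((M/B) ∩ (C/B))/(D/B) is isomorphic as a Lie algebra to (M ∩ C)/D. -/

import Mathlib

/-- `M` is a maximal (proper) subalgebra of `L`. -/
def IsMaximalSubalgebra {F : Type*} [Field F] {L : Type*} [LieRing L] [LieAlgebra F L]
    (M : LieSubalgebra F L) : Prop :=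
  M ≠ ⊤ ∧ ∀ K : LieSubalgebra F L, M < K → K = ⊤

/-- `C/D` is a chief factor of `L`: `D < C` are ideals of `L` and there is no ideal of `L`
strictly between them (equivalently, `C/D` is a minimal nonzero ideal of `L/D`). -/
def IsChiefFactor {F : Type*} [Field F] {L : Type*} [LieRing L] [LieAlgebra F L]
    (D C : LieIdeal F L) : Prop :=
  D < C ∧ ∀ K : LieIdeal F L, D ≤ K → K ≤ C → K = D ∨ K = C

/-- The subquotient `S/(S ∩ D)`, as a Lie algebra; when `D ⊆ S` this is `S/D`. -/
abbrev SubQuot {F : Type*} [Field F] {L : Type*} [LieRing L] [LieAlgebra F L]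
    (S : LieSubalgebra F L) (D : LieIdeal F L) :=
  S ⧸ LieIdeal.comap S.incl D

/-- The core `M_L` of a subalgebra `M`: the largest ideal of `L` contained in `M`. -/
def coreOf {F : Type*} [Field F] {L : Type*} [LieRing L] [LieAlgebra F L]
    (M : LieSubalgebra F L) : LieIdeal F L :=
  sSup {I : LieIdeal F L | (I : Set L) ⊆ M}

/-- The natural quotient map `L → L/B` as a morphism of Lie algebras. -/
def lieQuotMap {F : Type*} [Field F] {L : Type*} [LieRing L] [LieAlgebra F L]
    (B : LieIdeal F L) : L →ₗ⁅F⁆ L ⧸ B :=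
  { B.toSubmodule.mkQ with map_lie' := rfl }


section Helpers

variable {F : Type*} [Field F] {L : Type*} [LieRing L] [LieAlgebra F L]

lemma lieQuotMap_surjective (B : LieIdeal F L) :
    Function.Surjective (lieQuotMap B) :=
  Submodule.mkQ_surjective B.toSubmodule

lemma lieQuotMap_eq_zero_iff (B : LieIdeal F L) (x : L) :
    lieQuotMap B x = 0 ↔ x ∈ B :=
  Submodule.Quotient.mk_eq_zero B.toSubmodule

lemma lieQuotMap_eq_iff (B : LieIdeal F L) {x y : L} :
    lieQuotMap B x = lieQuotMap B y ↔ x - y ∈ B :=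
  Submodule.Quotient.eq B.toSubmodule

lemma mem_map_lieQuotMap_iff (B I : LieIdeal F L) (hBI : B ≤ I) (x : L) :
    lieQuotMap B x ∈ LieIdeal.map (lieQuotMap B) I ↔ x ∈ I := by
  constructor
  · intro h
    obtain ⟨⟨i, hi⟩, hfx⟩ := LieIdeal.mem_map_of_surjective (lieQuotMap_surjective B) h
    have : x - i ∈ B := (lieQuotMap_eq_iff B).mp hfx.symm
    have h2 := I.add_mem (hBI this) hi
    rwa [sub_add_cancel] at h2
  · intro h
    exact LieIdeal.mem_map h

lemma mem_map_lieQuotMap_iff' (B I : LieIdeal F L) (y : L ⧸ B) :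
    y ∈ LieIdeal.map (lieQuotMap B) I ↔ ∃ x ∈ I, lieQuotMap B x = y := by
  constructor
  · intro h
    obtain ⟨⟨i, hi⟩, hfx⟩ := LieIdeal.mem_map_of_surjective (lieQuotMap_surjective B) h
    exact ⟨i, hi, hfx⟩
  · rintro ⟨x, hx, rfl⟩
    exact LieIdeal.mem_map hx

/-- Congruence of Lie algebra quotients by equal ideals. -/
def lieQuotCongr {I J : LieIdeal F L} (h : I = J) : (L ⧸ I) ≃ₗ⁅F⁆ (L ⧸ J) := by
  subst h; exact LieEquiv.refl

end Helpers

theorem cSection_quotient {F : Type*} [Field F] {L : Type*} [LieRing L]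
    [LieAlgebra F L] [FiniteDimensional F L] (M : LieSubalgebra F L)
    (hM : IsMaximalSubalgebra M) (B C D : LieIdeal F L)
    (hBM : (B : Set L) ⊆ (M : Set L)) (hBD : B ≤ D) (hDC : D ≤ C)
    (hchief' : IsChiefFactor (LieIdeal.map (lieQuotMap B) D) (LieIdeal.map (lieQuotMap B) C))
    (hDM' : ((LieIdeal.map (lieQuotMap B) D : LieIdeal F (L ⧸ B)) : Set (L ⧸ B)) ⊆
      ((M.map (lieQuotMap B) : LieSubalgebra F (L ⧸ B)) : Set (L ⧸ B)))
    (hsup' : (M.map (lieQuotMap B)).toSubmodule ⊔ (LieIdeal.map (lieQuotMap B) C).toSubmodule = ⊤) :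
    (IsChiefFactor D C ∧ (D : Set L) ⊆ (M : Set L) ∧ M.toSubmodule ⊔ C.toSubmodule = ⊤) ∧
      Nonempty (SubQuot (M.map (lieQuotMap B) ⊓
          ((LieIdeal.map (lieQuotMap B) C) : LieSubalgebra F (L ⧸ B)))
          (LieIdeal.map (lieQuotMap B) D)
        ≃ₗ⁅F⁆ SubQuot (M ⊓ (C : LieSubalgebra F L)) D) := by
  have hBC : B ≤ C := le_trans hBD hDC
  -- Part 1a : chief factor
  have hchief : IsChiefFactor D C := by
    constructor
    · refine lt_of_le_of_ne hDC ?_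
      rintro rfl
      exact hchief'.1.ne rfl
    · intro K hDK hKC
      have hBK : B ≤ K := le_trans hBD hDK
      have hK : K = LieIdeal.comap (lieQuotMap B) (LieIdeal.map (lieQuotMap B) K) := by
        apply le_antisymm LieIdeal.comap_map_le
        intro x hx
        rw [LieIdeal.mem_comap, mem_map_lieQuotMap_iff B K hBK] at hx
        exact hx
      rcases hchief'.2 (LieIdeal.map (lieQuotMap B) K) (LieIdeal.map_mono hDK)
          (LieIdeal.map_mono hKC) with h | h
      · left
        rw [hK, h]
        ext x
        rw [LieIdeal.mem_comap, mem_map_lieQuotMap_iff B D hBD]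
      · right
        rw [hK, h]
        ext x
        rw [LieIdeal.mem_comap, mem_map_lieQuotMap_iff B C hBC]
  -- Part 1b : D ⊆ M
  have hDM : (D : Set L) ⊆ (M : Set L) := by
    intro x hx
    have h1 : (lieQuotMap B) x ∈ LieIdeal.map (lieQuotMap B) D := LieIdeal.mem_map hx
    have h2 := hDM' h1
    rw [LieSubalgebra.mem_coe, LieSubalgebra.mem_map] at h2
    obtain ⟨m, hm, hmx⟩ := h2
    have : x - m ∈ B := (lieQuotMap_eq_iff B).mp hmx.symm
    have h3 := M.add_mem (hBM this) hm
    rwa [sub_add_cancel] at h3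
  -- Part 1c : supplement
  have hsup : M.toSubmodule ⊔ C.toSubmodule = ⊤ := by
    rw [eq_top_iff]
    intro y _
    have : (lieQuotMap B) y ∈ (M.map (lieQuotMap B)).toSubmodule ⊔ (LieIdeal.map (lieQuotMap B) C).toSubmodule := by
      rw [hsup']; trivial
    rw [Submodule.mem_sup] at this
    obtain ⟨m', hm', c', hc', hsum⟩ := this
    rw [LieSubalgebra.mem_toSubmodule, LieSubalgebra.mem_map] at hm'
    obtain ⟨m, hm, rfl⟩ := hm'
    rw [LieSubmodule.mem_toSubmodule, mem_map_lieQuotMap_iff' B C] at hc'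
    obtain ⟨c, hc, rfl⟩ := hc'
    have hB : y - m - c ∈ B := by
      rw [← lieQuotMap_eq_zero_iff B, map_sub, map_sub, ← hsum]
      abel
    have h1 : m + (y - m - c) ∈ M := M.add_mem hm (hBM hB)
    rw [Submodule.mem_sup]
    exact ⟨m + (y - m - c), h1, c, hc, by abel⟩
  refine ⟨⟨hchief, hDM, hsup⟩, ?_⟩
  -- Part 2 : the isomorphism
  set S : LieSubalgebra F L := M ⊓ (C : LieSubalgebra F L) with hS
  set S' : LieSubalgebra F (L ⧸ B) :=
    M.map (lieQuotMap B) ⊓ ((LieIdeal.map (lieQuotMap B) C) : LieSubalgebra F (L ⧸ B)) with hS'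
  have hmemS' : ∀ x : S, (lieQuotMap B) x.1 ∈ S' := by
    rintro ⟨x, hx⟩
    rw [LieSubalgebra.mem_inf] at hx ⊢
    constructor
    · exact LieSubalgebra.mem_map _ _ _ |>.mpr ⟨x, hx.1, rfl⟩
    · have : x ∈ C := hx.2
      exact LieIdeal.mem_map this
  let φ : S →ₗ⁅F⁆ S' :=
    { toFun := fun x => ⟨(lieQuotMap B) x.1, hmemS' x⟩
      map_add' := fun x y => by ext; simp
      map_smul' := fun t x => by ext; exact map_smul ((lieQuotMap B) : L →ₗ[F] L ⧸ B) t x.1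
      map_lie' := fun {x y} => by ext; rfl }
  let J'' : LieIdeal F S' := LieIdeal.comap S'.incl (LieIdeal.map (lieQuotMap B) D)
  let f : S →ₗ⁅F⁆ S' ⧸ J'' := (lieQuotMap J'').comp φ
  have hfsurj : Function.Surjective f := by
    intro z
    obtain ⟨⟨y, hy⟩, rfl⟩ := lieQuotMap_surjective J'' z
    rw [LieSubalgebra.mem_inf] at hy
    obtain ⟨hy1, hy2⟩ := hy
    rw [LieSubalgebra.mem_map] at hy1
    obtain ⟨m, hm, rfl⟩ := hy1
    have hy2' : (lieQuotMap B) m ∈ LieIdeal.map (lieQuotMap B) C := hy2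
    rw [mem_map_lieQuotMap_iff' B C] at hy2'
    obtain ⟨c, hc, hcm⟩ := hy2'
    have hmc : m - c ∈ B := (lieQuotMap_eq_iff B).mp hcm.symm
    have hmC : m ∈ C := by
      have h4 := C.add_mem (hBC hmc) hc
      rwa [sub_add_cancel] at h4
    have hmS : m ∈ S := by rw [hS, LieSubalgebra.mem_inf]; exact ⟨hm, hmC⟩
    exact ⟨⟨m, hmS⟩, rfl⟩
  have hker : f.ker = LieIdeal.comap S.incl D := by
    ext ⟨x, hx⟩
    have hxC : x ∈ C := (LieSubalgebra.mem_inf _ _ _ |>.mp hx).2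
    rw [LieHom.mem_ker]
    change lieQuotMap J'' (φ ⟨x, hx⟩) = 0 ↔ _
    rw [lieQuotMap_eq_zero_iff]
    change (⟨(lieQuotMap B) x, _⟩ : S') ∈ J'' ↔ _
    rw [LieIdeal.mem_comap]
    change (lieQuotMap B) x ∈ LieIdeal.map (lieQuotMap B) D ↔ _
    rw [mem_map_lieQuotMap_iff B D hBD]
    rfl
  have hrange : f.range = ⊤ := (LieHom.range_eq_top f).mpr hfsurj
  have e1 : (S ⧸ f.ker) ≃ₗ⁅F⁆ f.range := f.quotKerEquivRange
  have e2 : (f.range : LieSubalgebra F (S' ⧸ J'')) ≃ₗ⁅F⁆ (S' ⧸ J'') := by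
    rw [hrange]; exact LieSubalgebra.topEquiv
  have e0 : SubQuot S D ≃ₗ⁅F⁆ (S ⧸ f.ker) := lieQuotCongr hker.symm
  exact ⟨((e0.trans e1).trans e2).symm⟩
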